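/- (Theorem 1, preferred sample.) Let E be a real Hilbert space, p_w, p_l : E → ℝ differentiable at θ with p_w(θ) > 0 and p_l(θ) > 0, β > 0, η > 0, r ∈ ℝ, σ(t) = 1/(1+exp(−t)), z = β(log p_w(θ) − log p_l(θ) − r), and L(θ') = −log σ(β(log p_w(θ') − log p_l(θ') − r)). Let Δθ = −η · grad L(θ) be one gradient step. Then the first-order change of the preferred probability satisfies ⟪grad p_w(θ), Δθ⟫ = η β (1−σ(z)) · p_w(θ) · (‖g_w‖² − ⟪g_w, g_l⟫), where g_w = grad(log∘p_w)(θ) and g_l = grad(log∘p_l)(θ). -/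

import Mathlib

open RealInnerProductSpace

/-- Theorem 1 (preferred sample): after one DPO gradient step `Δθ = -η • ∇L(θ)`,
the first-order change of the preferred probability equals
`η β (1-σ(z)) p_w(θ) (‖g_w‖² - ⟪g_w, g_l⟫)`. -/
theorem dpo_preferred_probability_update
    {E : Type*} [NormedAddCommGroup E] [InnerProductSpace ℝ E] [CompleteSpace E]
    (p_w p_l : E → ℝ) (θ : E)
    (hw : DifferentiableAt ℝ p_w θ) (hl : DifferentiableAt ℝ p_l θ)
    (hwpos : 0 < p_w θ) (hlpos : 0 < p_l θ)
    (β η r : ℝ) (hβ : 0 < β) (hη : 0 < η)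
    (σ : ℝ → ℝ) (hσ : ∀ t, σ t = 1 / (1 + Real.exp (-t)))
    (z : ℝ) (hz : z = β * (Real.log (p_w θ) - Real.log (p_l θ) - r))
    (L : E → ℝ)
    (hL : ∀ θ', L θ' = -Real.log (σ (β * (Real.log (p_w θ') - Real.log (p_l θ') - r))))
    (Δθ : E) (hΔθ : Δθ = (-η) • gradient L θ)
    (g_w g_l : E)
    (hgw : g_w = gradient (fun θ' => Real.log (p_w θ')) θ)
    (hgl : g_l = gradient (fun θ' => Real.log (p_l θ')) θ) :
    ⟪gradient p_w θ, Δθ⟫ =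
      η * β * (1 - σ z) * p_w θ * (‖g_w‖ ^ 2 - ⟪g_w, g_l⟫) := by
  set D := InnerProductSpace.toDual ℝ E with hD
  -- gradients of the log-probabilities
  have hlogw : HasFDerivAt (fun x => Real.log (p_w x)) ((p_w θ)⁻¹ • fderiv ℝ p_w θ) θ :=
    (Real.hasDerivAt_log hwpos.ne').comp_hasFDerivAt θ hw.hasFDerivAt
  have hlogl : HasFDerivAt (fun x => Real.log (p_l x)) ((p_l θ)⁻¹ • fderiv ℝ p_l θ) θ :=
    (Real.hasDerivAt_log hlpos.ne').comp_hasFDerivAt θ hl.hasFDerivAt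
  have hgw' : g_w = D.symm ((p_w θ)⁻¹ • fderiv ℝ p_w θ) := by
    rw [hgw, ← hlogw.hasGradientAt.gradient]
  have hgl' : g_l = D.symm ((p_l θ)⁻¹ • fderiv ℝ p_l θ) := by
    rw [hgl, ← hlogl.hasGradientAt.gradient]
  have hgradw : gradient p_w θ = p_w θ • g_w := by
    rw [hgw', map_smul]
    rw [smul_smul, mul_inv_cancel₀ hwpos.ne', one_smul]
    rfl
  -- the inner argument u and its derivative
  set u : E → ℝ := fun θ' => β * (Real.log (p_w θ') - Real.log (p_l θ') - r) with hu
  set Fu : E →L[ℝ] ℝ :=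
    β • ((p_w θ)⁻¹ • fderiv ℝ p_w θ - (p_l θ)⁻¹ • fderiv ℝ p_l θ) with hFu
  have hud : HasFDerivAt u Fu θ := ((hlogw.sub hlogl).sub_const r).const_mul β
  have hzu : u θ = z := hz.symm
  -- outer function φ and its derivative at z
  have hden : 0 < 1 + Real.exp (-z) := by positivity
  set c : ℝ := (1 + Real.exp (-z))⁻¹ * (Real.exp (-z) * (-1)) with hc
  have hφ : HasDerivAt (fun t : ℝ => Real.log (1 + Real.exp (-t))) c z := by
    have h1 : HasDerivAt (fun t : ℝ => -t) (-1) z := (hasDerivAt_id z).neg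
    have h2 : HasDerivAt (fun t : ℝ => Real.exp (-t)) (Real.exp (-z) * (-1)) z :=
      (Real.hasDerivAt_exp (-z)).comp z h1
    have h3 : HasDerivAt (fun t : ℝ => 1 + Real.exp (-t)) (Real.exp (-z) * (-1)) z :=
      h2.const_add 1
    have h4 := (Real.hasDerivAt_log hden.ne').comp z h3
    have hce : c = -((1 + Real.exp (-z))⁻¹ * Real.exp (-z)) := by rw [hc]; ring
    rw [hce]
    simpa [Function.comp_def] using h4
  -- L equals φ ∘ u
  have hLeq : L = (fun t : ℝ => Real.log (1 + Real.exp (-t))) ∘ u := by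
    funext θ'
    rw [hL, hσ, one_div, Real.log_inv, neg_neg]
    rfl
  have hLd : HasFDerivAt L (c • Fu) θ := by
    rw [hLeq]
    refine HasDerivAt.comp_hasFDerivAt θ ?_ hud
    rw [hzu]; exact hφ
  have hgradL : gradient L θ = c • β • (g_w - g_l) := by
    rw [hLd.hasGradientAt.gradient]
    rw [hgw', hgl', hFu]
    rw [map_smul, map_smul, map_sub]
  -- put it together
  have hσz : 1 - σ z = Real.exp (-z) * (1 + Real.exp (-z))⁻¹ := by
    rw [hσ, one_div]
    field_simp
    ring
  rw [hΔθ, hgradL, hgradw]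
  rw [smul_smul, smul_smul]
  rw [real_inner_smul_left, real_inner_smul_right, inner_sub_right,
    real_inner_self_eq_norm_sq]
  rw [hσz, hc]
  ring
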